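/- Let f(ρ,θ) be a nonzero real-analytic function near the origin without the factor ρ. If the Newton polygon N_f has an edge E whose edge-polynomial f_E has a nonzero real root of odd multiplicity, then f is not semi-definite: for every ε > 0, f takes both positive and negative values on Ω_ε = {(ρ,θ) : 0 < ρ < ε, |θ| < ε}. -/

import Mathlib

/-- Edge-polynomial `f_E(θ) = Σ_{(i,j) ∈ E ∩ Δ(f)} a_{i,j} θ^j` for the edge of the
Newton polygon lying on the line `q·u + p·v = ς`. -/
noncomputable def edgePolyA (a : ℕ × ℕ → ℝ) (p q ς : ℕ) : Polynomial ℝ :=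
  ∑ᶠ mn ∈ {mn : ℕ × ℕ | a mn ≠ 0 ∧ q * mn.1 + p * mn.2 = ς},
    Polynomial.C (a mn) * Polynomial.X ^ mn.2

open Polynomial in
/-- Along `ρ = t^q, θ = θ₀ t^p`, for small `t > 0` the sign of `f` agrees with the
sign of the edge polynomial at `θ₀`, provided the latter is nonzero. -/
lemma edge_sign_lemma (f : ℝ → ℝ → ℝ) (a : ℕ × ℕ → ℝ)
    (ε : ℝ) (hε : 0 < ε)
    (hsum : ∀ ρ θ : ℝ, |ρ| < ε → |θ| < ε →
      HasSum (fun mn : ℕ × ℕ => a mn * ρ ^ mn.1 * θ ^ mn.2) (f ρ θ))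
    (p q ς : ℕ) (hp : 0 < p) (hq : 0 < q)
    (hline : ∀ mn : ℕ × ℕ, a mn ≠ 0 → ς ≤ q * mn.1 + p * mn.2)
    (θ₀ : ℝ) (hP : (edgePolyA a p q ς).eval θ₀ ≠ 0) :
    ∀ ε' : ℝ, 0 < ε' → ∃ ρ θ : ℝ, 0 < ρ ∧ ρ < ε' ∧ |θ| < ε' ∧
      0 < f ρ θ * (edgePolyA a p q ς).eval θ₀ := by
  intro ε' hε'
  set L : ℝ := (edgePolyA a p q ς).eval θ₀ with hLdef
  -- the finset of edge points
  set E : Finset (ℕ × ℕ) :=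
    (Finset.range (ς+1) ×ˢ Finset.range (ς+1)).filter
      (fun mn => a mn ≠ 0 ∧ q * mn.1 + p * mn.2 = ς) with hEdef
  have hEset : {mn : ℕ × ℕ | a mn ≠ 0 ∧ q * mn.1 + p * mn.2 = ς} = ↑E := by
    ext mn
    have h1 : mn.1 ≤ q * mn.1 := Nat.le_mul_of_pos_left _ hq
    have h2 : mn.2 ≤ p * mn.2 := Nat.le_mul_of_pos_left _ hp
    simp only [hEdef, Finset.coe_filter, Finset.mem_product, Finset.mem_range,
      Set.mem_setOf_eq]
    constructor
    · rintro ⟨h, h'⟩; exact ⟨⟨by omega, by omega⟩, h, h'⟩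
    · rintro ⟨_, h⟩; exact h
  have hPE : edgePolyA a p q ς = ∑ mn ∈ E, Polynomial.C (a mn) * Polynomial.X ^ mn.2 := by
    rw [edgePolyA, hEset, finsum_mem_coe_finset]
  have hLE : L = ∑ mn ∈ E, a mn * θ₀ ^ mn.2 := by
    rw [hLdef, hPE]; simp [Polynomial.eval_finset_sum]
  set b : ℕ × ℕ → ℝ := fun mn => a mn * θ₀ ^ mn.2 with hbdef
  set g : ℝ → ℕ × ℕ → ℝ := fun t mn => b mn * t ^ (q * mn.1 + p * mn.2) with hgdef
  have hgsum : ∀ t : ℝ, |t ^ q| < ε → |θ₀ * t ^ p| < ε →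
      HasSum (g t) (f (t ^ q) (θ₀ * t ^ p)) := by
    intro t h1 h2
    have hthis := hsum (t ^ q) (θ₀ * t ^ p) h1 h2
    have hfun : (fun mn : ℕ × ℕ => a mn * (t ^ q) ^ mn.1 * (θ₀ * t ^ p) ^ mn.2) = g t := by
      funext mn
      show a mn * (t ^ q) ^ mn.1 * (θ₀ * t ^ p) ^ mn.2 = b mn * t ^ (q * mn.1 + p * mn.2)
      rw [hbdef, mul_pow, pow_add, ← pow_mul, ← pow_mul]; ring
    rwa [hfun] at hthis
  have hEg : ∀ t : ℝ, ∑ mn ∈ E, g t mn = L * t ^ ς := by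
    intro t
    rw [hLE, Finset.sum_mul]
    refine Finset.sum_congr rfl ?_
    intro mn hmn
    have h : q * mn.1 + p * mn.2 = ς := by
      simp only [hEdef, Finset.mem_filter] at hmn; exact hmn.2.2
    show b mn * t ^ (q * mn.1 + p * mn.2) = a mn * θ₀ ^ mn.2 * t ^ ς
    rw [h, hbdef]
  -- choose the base scale t₀
  set t₀ : ℝ := min 1 (min (ε / 2) (ε / (2 * (|θ₀| + 1)))) with ht₀def
  have hθ1 : (0:ℝ) < |θ₀| + 1 := by positivity
  have ht₀pos : 0 < t₀ := by
    refine lt_min (by norm_num) (lt_min (by positivity) (by positivity))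
  have ht₀1 : t₀ ≤ 1 := min_le_left _ _
  have hcond : ∀ t : ℝ, 0 < t → t ≤ t₀ → |t ^ q| < ε ∧ |θ₀ * t ^ p| < ε := by
    intro t ht htt₀
    have ht1 : t ≤ 1 := htt₀.trans ht₀1
    have htq : t ^ q ≤ t := by
      calc t ^ q ≤ t ^ 1 := pow_le_pow_of_le_one ht.le ht1 hq
        _ = t := pow_one t
    have htp : t ^ p ≤ t := by
      calc t ^ p ≤ t ^ 1 := pow_le_pow_of_le_one ht.le ht1 hp
        _ = t := pow_one t
    have hA : t₀ ≤ ε / 2 := (min_le_right _ _).trans (min_le_left _ _)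
    have hB : t₀ ≤ ε / (2 * (|θ₀| + 1)) := (min_le_right _ _).trans (min_le_right _ _)
    constructor
    · rw [abs_of_pos (pow_pos ht q)]
      linarith
    · rw [abs_mul, abs_of_pos (pow_pos ht p)]
      have h1 : |θ₀| * t ^ p ≤ (|θ₀| + 1) * t := by nlinarith [abs_nonneg θ₀]
      have h2 : (|θ₀| + 1) * t ≤ (|θ₀| + 1) * (ε / (2 * (|θ₀| + 1))) := by
        apply mul_le_mul_of_nonneg_left (htt₀.trans hB) hθ1.le
      have h3 : (|θ₀| + 1) * (ε / (2 * (|θ₀| + 1))) = ε / 2 := by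
        field_simp
      linarith
  obtain ⟨hq₀, hp₀⟩ := hcond t₀ ht₀pos le_rfl
  have hS₀ := hgsum t₀ hq₀ hp₀
  have hA : Summable fun mn => |g t₀ mn| := summable_abs_iff.mpr hS₀.summable
  set C : ℝ := ∑' mn, |g t₀ mn| with hCdef
  have hC0 : 0 ≤ C := tsum_nonneg fun _ => abs_nonneg _
  have hLpos : 0 < |L| := abs_pos.mpr hP
  -- choose t
  set m : ℝ := min t₀ (min ε' (min (ε' / (|θ₀| + 1)) (|L| * t₀ ^ (ς + 1) / (C + 1))))
    with hmdef
  have hmpos : 0 < m := by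
    refine lt_min ht₀pos (lt_min hε' (lt_min (by positivity) (by positivity)))
  set t : ℝ := m / 2 with htdef
  have ht : 0 < t := by positivity
  have htm : t < m := by rw [htdef]; linarith
  have htt₀ : t < t₀ := htm.trans_le (min_le_left _ _)
  have htε' : t < ε' := htm.trans_le ((min_le_right _ _).trans (min_le_left _ _))
  have htθ : t < ε' / (|θ₀| + 1) :=
    htm.trans_le ((min_le_right _ _).trans ((min_le_right _ _).trans (min_le_left _ _)))
  have htL : t < |L| * t₀ ^ (ς + 1) / (C + 1) :=
    htm.trans_le ((min_le_right _ _).trans ((min_le_right _ _).trans (min_le_right _ _)))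
  obtain ⟨hq₁, hp₁⟩ := hcond t ht htt₀.le
  have hS := hgsum t hq₁ hp₁
  set S : ℝ := f (t ^ q) (θ₀ * t ^ p) with hSdef
  have hAbs_t : Summable fun mn => |g t mn| := summable_abs_iff.mpr hS.summable
  have hcompl : HasSum (fun x : {x // x ∉ E} => g t ↑x) (S - L * t ^ ς) := by
    refine (E.hasSum_compl_iff).mpr ?_
    rw [hEg t, sub_add_cancel]
    exact hS
  set r : ℝ := t ^ (ς + 1) / t₀ ^ (ς + 1) with hrdef
  have hr0 : 0 ≤ r := by positivity
  -- termwise bound off the edge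
  have hterm : ∀ x : {x // x ∉ E}, |g t ↑x| ≤ r * |g t₀ ↑x| := by
    rintro ⟨mn, hmn⟩
    by_cases ha : a mn = 0
    · simp only [hgdef, hbdef, ha]
      simp [abs_nonneg, mul_nonneg hr0 (abs_nonneg _)]
    · have hk : ς + 1 ≤ q * mn.1 + p * mn.2 := by
        have h1 := hline mn ha
        have h2 : q * mn.1 + p * mn.2 ≠ ς := by
          intro h
          exact hmn (by rw [← Finset.mem_coe, ← hEset]; exact ⟨ha, h⟩)
        omega
      set k : ℕ := q * mn.1 + p * mn.2 with hkdef
      show |b mn * t ^ k| ≤ r * |b mn * t₀ ^ k|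
      have lhs : |b mn * t ^ k| = |b mn| * t ^ k := by
        rw [abs_mul, abs_of_pos (pow_pos ht k)]
      have rhs : |b mn * t₀ ^ k| = |b mn| * t₀ ^ k := by
        rw [abs_mul, abs_of_pos (pow_pos ht₀pos k)]
      have hsplitt : t ^ k = t ^ (ς + 1) * t ^ (k - (ς + 1)) := by
        rw [← pow_add]; congr 1; omega
      have hsplitt₀ : t₀ ^ k = t₀ ^ (ς + 1) * t₀ ^ (k - (ς + 1)) := by
        rw [← pow_add]; congr 1; omega
      rw [lhs, rhs, hsplitt, hsplitt₀]
      have hrhs : r * (|b mn| * (t₀ ^ (ς + 1) * t₀ ^ (k - (ς + 1)))) =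
          |b mn| * (t ^ (ς + 1) * t₀ ^ (k - (ς + 1))) := by
        rw [hrdef]
        field_simp
      rw [hrhs]
      have : t ^ (k - (ς + 1)) ≤ t₀ ^ (k - (ς + 1)) :=
        pow_le_pow_left₀ ht.le htt₀.le _
      have h2 : t ^ (ς + 1) * t ^ (k - (ς + 1)) ≤ t ^ (ς + 1) * t₀ ^ (k - (ς + 1)) :=
        mul_le_mul_of_nonneg_left this (by positivity)
      exact mul_le_mul_of_nonneg_left h2 (abs_nonneg _)
  have hsub1 : Summable fun x : {x // x ∉ E} => |g t ↑x| :=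
    (hAbs_t.subtype {x | x ∉ E})
  have hsub2 : Summable fun x : {x // x ∉ E} => |g t₀ ↑x| :=
    (hA.subtype {x | x ∉ E})
  have hbound : |S - L * t ^ ς| ≤ r * C := by
    rw [← hcompl.tsum_eq]
    calc |∑' x : {x // x ∉ E}, g t ↑x| ≤ ∑' x : {x // x ∉ E}, |g t ↑x| := by
          have := norm_tsum_le_tsum_norm (f := fun x : {x // x ∉ E} => g t ↑x)
            (by simpa [Real.norm_eq_abs] using hsub1)
          simpa [Real.norm_eq_abs] using this
      _ ≤ ∑' x : {x // x ∉ E}, r * |g t₀ ↑x| :=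
          Summable.tsum_le_tsum hterm hsub1 (hsub2.mul_left r)
      _ = r * ∑' x : {x // x ∉ E}, |g t₀ ↑x| := tsum_mul_left
      _ ≤ r * C := by
          refine mul_le_mul_of_nonneg_left ?_ hr0
          exact Summable.tsum_le_tsum_of_inj (Subtype.val) Subtype.val_injective
            (fun c _ => abs_nonneg _) (fun x => le_rfl) hsub2 hA
  have hfinal : r * C < t ^ ς * |L| := by
    have h1 : t * (C + 1) < |L| * t₀ ^ (ς + 1) :=
      (lt_div_iff₀ (show (0:ℝ) < C + 1 by positivity)).mp htL
    have h2 : t * C < |L| * t₀ ^ (ς + 1) := by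
      have hh : t * C + t = t * (C + 1) := by ring
      linarith
    rw [hrdef, div_mul_eq_mul_div, div_lt_iff₀ (by positivity), pow_succ]
    calc t ^ ς * t * C = t ^ ς * (t * C) := by ring
      _ < t ^ ς * (|L| * t₀ ^ (ς + 1)) := by
          exact mul_lt_mul_of_pos_left h2 (pow_pos ht ς)
      _ = t ^ ς * |L| * t₀ ^ (ς + 1) := by ring
  have habs : |S - L * t ^ ς| < t ^ ς * |L| := lt_of_le_of_lt hbound hfinal
  -- conclude sign agreement
  refine ⟨t ^ q, θ₀ * t ^ p, pow_pos ht q, ?_, ?_, ?_⟩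
  · have ht1 : t ≤ 1 := htt₀.le.trans ht₀1
    calc t ^ q ≤ t ^ 1 := pow_le_pow_of_le_one ht.le ht1 hq
      _ = t := pow_one t
      _ < ε' := htε'
  · have ht1 : t ≤ 1 := htt₀.le.trans ht₀1
    rw [abs_mul, abs_of_pos (pow_pos ht p)]
    have h1 : |θ₀| * t ^ p ≤ (|θ₀| + 1) * t := by
      have htp : t ^ p ≤ t := by
        calc t ^ p ≤ t ^ 1 := pow_le_pow_of_le_one ht.le ht1 hp
          _ = t := pow_one t
      nlinarith [abs_nonneg θ₀]
    have h2 : (|θ₀| + 1) * t < ε' := by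
      rw [lt_div_iff₀ hθ1] at htθ
      linarith
    linarith
  · show 0 < S * L
    set d : ℝ := S - L * t ^ ς with hddef
    have h2 : -(|d| * |L|) ≤ d * L := by rw [← abs_mul]; exact neg_abs_le _
    have h3 : |d| * |L| < t ^ ς * |L| * |L| := by
      exact mul_lt_mul_of_pos_right habs hLpos
    have h4 : |L| * |L| = L * L := abs_mul_abs_self L
    have h5 : S * L = d * L + t ^ ς * (L * L) := by rw [hddef]; ring
    have h6 : t ^ ς * |L| * |L| = t ^ ς * (L * L) := by rw [mul_assoc, h4]
    linarith


open Polynomial in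
lemma odd_root_sign (P : Polynomial ℝ) (c : ℝ)
    (hodd : Odd (P.rootMultiplicity c)) :
    ∃ x y : ℝ, 0 < P.eval x ∧ P.eval y < 0 := by
  have hP0 : P ≠ 0 := by
    rintro rfl
    rw [Polynomial.rootMultiplicity_zero] at hodd
    simpa using Nat.odd_iff.mp hodd
  set k : ℕ := P.rootMultiplicity c with hkdef
  set Q : Polynomial ℝ := P /ₘ (X - C c) ^ k with hQdef
  have hQc : Q.eval c ≠ 0 := Polynomial.eval_divByMonic_pow_rootMultiplicity_ne_zero c hP0
  have heval : ∀ x : ℝ, P.eval x = (x - c) ^ k * Q.eval x := by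
    intro x
    conv_lhs => rw [← Polynomial.pow_mul_divByMonic_rootMultiplicity_eq P c]
    simp [Polynomial.eval_mul, Polynomial.eval_pow]
    rfl
  have hcont : ContinuousAt (fun x : ℝ => Q.eval x) c := (Polynomial.continuous Q).continuousAt
  obtain ⟨δ, hδ0, hδ⟩ := Metric.continuousAt_iff.mp hcont |Q.eval c| (abs_pos.mpr hQc)
  have hx1 : dist (c + δ / 2) c < δ := by
    rw [Real.dist_eq]; rw [abs_of_pos (by linarith : (0:ℝ) < c + δ / 2 - c)]; linarith
  have hx2 : dist (c - δ / 2) c < δ := by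
    rw [Real.dist_eq]; rw [abs_of_neg (by linarith : c - δ / 2 - c < 0)]; linarith
  have hsign : ∀ x : ℝ, dist x c < δ → (0 < Q.eval c → 0 < Q.eval x) ∧
      (Q.eval c < 0 → Q.eval x < 0) := by
    intro x hx
    have := hδ hx
    rw [Real.dist_eq, abs_lt] at this
    constructor
    · intro h; rw [abs_of_pos h] at this; linarith [this.1]
    · intro h; rw [abs_of_neg h] at this; linarith [this.2]
  have hpow_pos : (0:ℝ) < (δ / 2) ^ k := pow_pos (by linarith) k
  have hneg_pow : (-(δ / 2)) ^ k = -((δ / 2) ^ k) := hodd.neg_pow _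
  have he1 : P.eval (c + δ / 2) = (δ / 2) ^ k * Q.eval (c + δ / 2) := by
    rw [heval]; norm_num
  have he2 : P.eval (c - δ / 2) = -((δ / 2) ^ k) * Q.eval (c - δ / 2) := by
    rw [heval, ← hneg_pow]; norm_num
  rcases lt_or_gt_of_ne hQc with h | h
  · refine ⟨c - δ / 2, c + δ / 2, ?_, ?_⟩
    · rw [he2]
      have := (hsign _ hx2).2 h
      nlinarith
    · rw [he1]
      have := (hsign _ hx1).2 h
      nlinarith
  · refine ⟨c + δ / 2, c - δ / 2, ?_, ?_⟩
    · rw [he1]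
      have := (hsign _ hx1).1 h
      nlinarith
    · rw [he2]
      have := (hsign _ hx2).1 h
      nlinarith

/-- if an edge-polynomial of the Newton polygon of a nonzero
real-analytic `f` (without the factor `ρ`) has a nonzero real root of odd
multiplicity, then `f` is not semi-definite: it takes both signs on every `Ω_ε`. -/
theorem not_semidefinite_of_odd_root (f : ℝ → ℝ → ℝ) (a : ℕ × ℕ → ℝ)
    (ε : ℝ) (hε : 0 < ε)
    (hsum : ∀ ρ θ : ℝ, |ρ| < ε → |θ| < ε →
      HasSum (fun mn : ℕ × ℕ => a mn * ρ ^ mn.1 * θ ^ mn.2) (f ρ θ))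
    (hnofactρ : ∃ j : ℕ, a (0, j) ≠ 0)
    (p q ς : ℕ) (hp : 0 < p) (hq : 0 < q) (hcop : Nat.Coprime p q)
    (hline : ∀ mn : ℕ × ℕ, a mn ≠ 0 → ς ≤ q * mn.1 + p * mn.2)
    (hedge : ∃ mn mn' : ℕ × ℕ, mn ≠ mn' ∧ a mn ≠ 0 ∧ a mn' ≠ 0 ∧
      q * mn.1 + p * mn.2 = ς ∧ q * mn'.1 + p * mn'.2 = ς)
    (c : ℝ) (hc : c ≠ 0)
    (hodd : Odd ((edgePolyA a p q ς).rootMultiplicity c)) :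
    ∀ ε' : ℝ, 0 < ε' →
      (∃ ρ₁ θ₁ : ℝ, 0 < ρ₁ ∧ ρ₁ < ε' ∧ |θ₁| < ε' ∧ 0 < f ρ₁ θ₁) ∧
      (∃ ρ₂ θ₂ : ℝ, 0 < ρ₂ ∧ ρ₂ < ε' ∧ |θ₂| < ε' ∧ f ρ₂ θ₂ < 0) := by
  intro ε' hε'
  obtain ⟨x, y, hx, hy⟩ := odd_root_sign (edgePolyA a p q ς) c hodd
  constructor
  · obtain ⟨ρ, θ, h1, h2, h3, h4⟩ :=
      edge_sign_lemma f a ε hε hsum p q ς hp hq hline x (ne_of_gt hx) ε' hε'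
    exact ⟨ρ, θ, h1, h2, h3, by nlinarith⟩
  · obtain ⟨ρ, θ, h1, h2, h3, h4⟩ :=
      edge_sign_lemma f a ε hε hsum p q ς hp hq hline y (ne_of_lt hy) ε' hε'
    exact ⟨ρ, θ, h1, h2, h3, by nlinarith⟩
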